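/- Let Σ̂ be a real symmetric positive semidefinite p×p matrix, let Ω and Ω̂ be real symmetric positive definite p×p matrices with positive semidefinite square roots Ω^{1/2} and Ω̂^{1/2}, let Σ be any real p×p matrix, and let λ > 0. Then λ·|tr(Σ(Σ̂ + λΩ̂⁻¹)⁻¹(Ω̂⁻¹ − Ω⁻¹)(Σ̂ + λΩ⁻¹)⁻¹)| ≤ (p/λ)·‖Σ‖·‖Ω̂⁻¹ − Ω⁻¹‖·‖Ω̂^{1/2}‖²·‖Ω^{1/2}‖², where ‖·‖ denotes the ℓ²-operator norm on matrices. -/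

import Mathlib

open Matrix
open scoped Matrix.Norms.L2Operator RealInnerProductSpace

/-- The ℓ²-operator norm (spectral norm) of a real matrix, i.e. the operator norm of the
induced linear map between Euclidean spaces. -/
noncomputable def opNorm {m n : ℕ} (A : Matrix (Fin m) (Fin n) ℝ) : ℝ :=
  ‖LinearMap.toContinuousLinearMap (Matrix.toEuclideanLin A)‖

lemma opNorm_eq_norm {m n : ℕ} (A : Matrix (Fin m) (Fin n) ℝ) : opNorm A = ‖A‖ := rfl

lemma abs_entry_le_norm {p : ℕ} (M : Matrix (Fin p) (Fin p) ℝ) (i : Fin p) :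
    |M i i| ≤ ‖M‖ := by
  have h2 := M.l2_opNorm_mulVec (EuclideanSpace.single i (1:ℝ))
  rw [EuclideanSpace.norm_single] at h2
  simp only [norm_one, mul_one] at h2
  refine le_trans ?_ h2
  rw [EuclideanSpace.norm_eq]
  have hmv : ∀ j, ((EuclideanSpace.equiv (Fin p) ℝ).symm
      (M *ᵥ (EuclideanSpace.single i (1:ℝ)))) j = M j i := by
    intro j
    show (M *ᵥ (fun k => EuclideanSpace.single i (1:ℝ) k)) j = M j i
    simp [Matrix.mulVec, dotProduct, EuclideanSpace.single_apply]
  calc |M i i| = Real.sqrt (‖M i i‖^2) := by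
        rw [Real.sqrt_sq_eq_abs]; simp [abs_abs]
    _ ≤ _ := by
        apply Real.sqrt_le_sqrt
        simp only [hmv]
        exact Finset.single_le_sum (f := fun j => ‖M j i‖^2)
          (fun j _ => by positivity) (Finset.mem_univ i)

lemma abs_trace_le {p : ℕ} (M : Matrix (Fin p) (Fin p) ℝ) :
    |M.trace| ≤ (p : ℝ) * ‖M‖ := by
  calc |M.trace| = |∑ i, M i i| := by simp [Matrix.trace, Matrix.diag]
    _ ≤ ∑ i, |M i i| := Finset.abs_sum_le_sum_abs _ _
    _ ≤ ∑ _i : Fin p, ‖M‖ := Finset.sum_le_sum fun i _ => abs_entry_le_norm M i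
    _ = (p : ℝ) * ‖M‖ := by simp [Finset.sum_const, nsmul_eq_mul]

lemma smul_one_posDef {p : ℕ} {lam : ℝ} (hlam : 0 < lam) :
    (lam • (1 : Matrix (Fin p) (Fin p) ℝ)).PosDef := by
  refine Matrix.PosDef.of_dotProduct_mulVec_pos ?_ ?_
  · simp [Matrix.IsHermitian]
  · intro x hx
    have h : star x ⬝ᵥ (lam • (1:Matrix (Fin p) (Fin p) ℝ)) *ᵥ x = lam * (star x ⬝ᵥ x) := by
      simp [Matrix.smul_mulVec, Matrix.one_mulVec, dotProduct_smul, smul_eq_mul]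
    rw [h]
    exact mul_pos hlam (dotProduct_star_self_pos_iff.mpr hx)

lemma norm_inv_add_smul_one_le {p : ℕ} {P : Matrix (Fin p) (Fin p) ℝ} (hP : P.PosSemidef)
    {lam : ℝ} (hlam : 0 < lam) : ‖(P + lam • (1 : Matrix (Fin p) (Fin p) ℝ))⁻¹‖ ≤ 1 / lam := by
  have hM : (P + lam • (1 : Matrix (Fin p) (Fin p) ℝ)).PosDef :=
    Matrix.PosDef.posSemidef_add hP (smul_one_posDef hlam)
  set M := P + lam • (1 : Matrix (Fin p) (Fin p) ℝ) with hMdef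
  have hdet : IsUnit M.det := hM.det_pos.ne'.isUnit
  have hMM : M * M⁻¹ = 1 := Matrix.mul_nonsing_inv M hdet
  rw [Matrix.l2_opNorm_def]
  apply ContinuousLinearMap.opNorm_le_bound _ (by positivity)
  intro x
  show ‖Matrix.toEuclideanLin M⁻¹ x‖ ≤ 1 / lam * ‖x‖
  set y := Matrix.toEuclideanLin M⁻¹ x with hy
  have hyx : Matrix.toEuclideanLin M y = x := by
    rw [hy]
    have h1 : Matrix.toEuclideanLin M (Matrix.toEuclideanLin M⁻¹ x)
        = Matrix.toEuclideanLin (M * M⁻¹) x := by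
      simp [Matrix.toEuclideanLin_apply, Matrix.mulVec_mulVec]
    rw [h1, hMM]
    simp [Matrix.toEuclideanLin_apply, Matrix.one_mulVec]
  have hPy : 0 ≤ ⟪y, Matrix.toEuclideanLin P y⟫ := by
    have h := hP.re_dotProduct_nonneg (WithLp.equiv 2 _ y)
    simpa [Matrix.toEuclideanLin_apply, EuclideanSpace.inner_eq_star_dotProduct, dotProduct_comm] using h
  have hone : Matrix.toEuclideanLin (1 : Matrix (Fin p) (Fin p) ℝ) y = y := by
    simp [Matrix.toEuclideanLin_apply, Matrix.one_mulVec]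
  have hsum : ⟪y, x⟫ = ⟪y, Matrix.toEuclideanLin P y⟫ + lam * ‖y‖^2 := by
    conv_lhs => rw [← hyx, hMdef]
    rw [map_add, LinearMap.add_apply, _root_.map_smul, LinearMap.smul_apply, hone, inner_add_right, real_inner_smul_right,
      real_inner_self_eq_norm_sq]
  have h1 : lam * ‖y‖^2 ≤ ⟪y, x⟫ := by rw [hsum]; linarith
  have h2 : ⟪y, x⟫ ≤ ‖y‖ * ‖x‖ := real_inner_le_norm y x
  rcases eq_or_lt_of_le (norm_nonneg y) with h0 | h0
  · rw [← h0]; positivity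
  · rw [div_mul_eq_mul_div, one_mul, le_div_iff₀ hlam]
    nlinarith

lemma norm_inv_shift_le {p : ℕ} {Shat Om S : Matrix (Fin p) (Fin p) ℝ}
    (hShat : Shat.PosSemidef) (hOm : Om.PosDef) (hS : S.PosSemidef) (hSsq : S * S = Om)
    {lam : ℝ} (hlam : 0 < lam) :
    ‖(Shat + lam • Om⁻¹)⁻¹‖ ≤ ‖S‖ ^ 2 / lam := by
  have hdet : IsUnit S.det := by
    have h : S.det * S.det = Om.det := by rw [← Matrix.det_mul, hSsq]
    have : S.det ≠ 0 := by
      intro h0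
      rw [h0, mul_zero] at h
      exact hOm.det_pos.ne' h.symm
    exact this.isUnit
  have h1 : S⁻¹ * S = 1 := Matrix.nonsing_inv_mul S hdet
  have h2 : S * S⁻¹ = 1 := Matrix.mul_nonsing_inv S hdet
  have hOminv : Om⁻¹ = S⁻¹ * S⁻¹ := by rw [← hSsq, Matrix.mul_inv_rev]
  have hid : Shat + lam • Om⁻¹ = S⁻¹ * (S * Shat * S + lam • 1) * S⁻¹ := by
    have e : S⁻¹ * (S * Shat * S + lam • (1 : Matrix (Fin p) (Fin p) ℝ)) * S⁻¹
        = (S⁻¹ * S) * Shat * (S * S⁻¹) + lam • (S⁻¹ * S⁻¹) := by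
      rw [Matrix.mul_add, Matrix.add_mul, Matrix.mul_smul, Matrix.smul_mul, Matrix.mul_one]
      simp [Matrix.mul_assoc]
    rw [e, h1, h2, Matrix.one_mul, Matrix.mul_one, hOminv]
  have hmid : (S * Shat * S).PosSemidef := by
    have := hShat.conjTranspose_mul_mul_same S
    rwa [hS.1] at this
  rw [hid, Matrix.mul_inv_rev, Matrix.mul_inv_rev, Matrix.nonsing_inv_nonsing_inv S hdet]
  have hb := norm_inv_add_smul_one_le hmid hlam
  calc ‖S * ((S * Shat * S + lam • 1)⁻¹ * S)‖
      ≤ ‖S‖ * ‖(S * Shat * S + lam • 1)⁻¹ * S‖ := Matrix.l2_opNorm_mul _ _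
    _ ≤ ‖S‖ * (‖(S * Shat * S + lam • 1)⁻¹‖ * ‖S‖) := by
        have := Matrix.l2_opNorm_mul (S * Shat * S + lam • (1:Matrix (Fin p) (Fin p) ℝ))⁻¹ S
        exact mul_le_mul_of_nonneg_left this (norm_nonneg S)
    _ ≤ ‖S‖ * (1 / lam * ‖S‖) := by
        have hn := norm_nonneg S
        gcongr
    _ = ‖S‖ ^ 2 / lam := by ring

/-- with `Σ̂` positive semidefinite, `Ω, Ω̂` positive definite with positive
semidefinite square roots `S = Ω^{1/2}`, `T = Ω̂^{1/2}`, and `λ > 0`: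
`λ·|tr(Σ(Σ̂ + λΩ̂⁻¹)⁻¹(Ω̂⁻¹ − Ω⁻¹)(Σ̂ + λΩ⁻¹)⁻¹)|
   ≤ (p/λ)·‖Σ‖·‖Ω̂⁻¹ − Ω⁻¹‖·‖Ω̂^{1/2}‖²·‖Ω^{1/2}‖²`. -/
theorem stmt_5 (p : ℕ) (Shat Om Omh Sg S T : Matrix (Fin p) (Fin p) ℝ)
    (hShat : Shat.PosSemidef) (hOm : Om.PosDef) (hOmh : Omh.PosDef)
    (hS : S.PosSemidef) (hSsq : S * S = Om)
    (hT : T.PosSemidef) (hTsq : T * T = Omh)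
    (lam : ℝ) (hlam : 0 < lam) :
    lam * |Matrix.trace (Sg * (Shat + lam • Omh⁻¹)⁻¹ * (Omh⁻¹ - Om⁻¹) *
        (Shat + lam • Om⁻¹)⁻¹)| ≤
      ((p : ℝ) / lam) * opNorm Sg * opNorm (Omh⁻¹ - Om⁻¹) * opNorm T ^ 2 * opNorm S ^ 2 := by
  simp only [opNorm_eq_norm]
  set B := (Shat + lam • Omh⁻¹)⁻¹ with hB
  set A := (Shat + lam • Om⁻¹)⁻¹ with hA
  set C := Omh⁻¹ - Om⁻¹ with hC
  have hBle : ‖B‖ ≤ ‖T‖ ^ 2 / lam := norm_inv_shift_le hShat hOmh hT hTsq hlam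
  have hAle : ‖A‖ ≤ ‖S‖ ^ 2 / lam := norm_inv_shift_le hShat hOm hS hSsq hlam
  have htr : |Matrix.trace (Sg * B * C * A)| ≤ (p : ℝ) * ‖Sg * B * C * A‖ :=
    abs_trace_le _
  have hnorm : ‖Sg * B * C * A‖ ≤ ‖Sg‖ * ‖B‖ * ‖C‖ * ‖A‖ := by
    calc ‖Sg * B * C * A‖ ≤ ‖Sg * B * C‖ * ‖A‖ := Matrix.l2_opNorm_mul _ _
      _ ≤ (‖Sg * B‖ * ‖C‖) * ‖A‖ :=
          mul_le_mul_of_nonneg_right (Matrix.l2_opNorm_mul _ _) (norm_nonneg _)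
      _ ≤ ((‖Sg‖ * ‖B‖) * ‖C‖) * ‖A‖ := by
          have := Matrix.l2_opNorm_mul Sg B
          gcongr
  have key : |Matrix.trace (Sg * B * C * A)|
      ≤ (p : ℝ) * (‖Sg‖ * (‖T‖ ^ 2 / lam) * ‖C‖ * (‖S‖ ^ 2 / lam)) := by
    refine le_trans htr ?_
    have h0B : (0:ℝ) ≤ ‖B‖ := norm_nonneg _
    have h0A : (0:ℝ) ≤ ‖A‖ := norm_nonneg _
    gcongr
    exact le_trans hnorm (by gcongr)
  have hfin : lam * ((p : ℝ) * (‖Sg‖ * (‖T‖ ^ 2 / lam) * ‖C‖ * (‖S‖ ^ 2 / lam)))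
      = ((p : ℝ) / lam) * ‖Sg‖ * ‖C‖ * ‖T‖ ^ 2 * ‖S‖ ^ 2 := by
    field_simp
  calc lam * |Matrix.trace (Sg * B * C * A)|
      ≤ lam * ((p : ℝ) * (‖Sg‖ * (‖T‖ ^ 2 / lam) * ‖C‖ * (‖S‖ ^ 2 / lam))) :=
        mul_le_mul_of_nonneg_left key hlam.le
    _ = _ := hfin
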